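/- For a metric space (Y,ρ): Y is totally bounded if and only if there exists a metric space (X,d) with a nonempty set of limit points such that every function f:(X,d)→(Y,ρ) is almost bounded. -/

import Mathlib

open Metric Filter

/-- A sequence is cofinally Cauchy if for every ε>0 there is an infinite index set
on which all pairwise distances are < ε. -/
def CofinallyCauchy {X : Type*} [MetricSpace X] (x : ℕ → X) : Prop :=
  ∀ ε > 0, ∃ N : Set ℕ, N.Infinite ∧ ∀ n ∈ N, ∀ j ∈ N, dist (x n) (x j) < ε

/-- A function is almost bounded if for every ε>0 there is δ>0 such that the image of
every set of diameter < δ is contained in a finite union of open ε-balls. -/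
def AlmostBounded {X Y : Type*} [MetricSpace X] [MetricSpace Y] (f : X → Y) : Prop :=
  ∀ ε > 0, ∃ δ > 0, ∀ A : Set X, EMetric.diam A < ENNReal.ofReal δ →
    ∃ B : Finset Y, f '' A ⊆ ⋃ b ∈ B, Metric.ball b ε

/-- A metric space is cofinally complete if every cofinally Cauchy sequence clusters. -/
def CofinallyComplete (X : Type*) [MetricSpace X] : Prop :=
  ∀ x : ℕ → X, CofinallyCauchy x → ∃ p : X, MapClusterPt p atTop x

/-- The local total boundedness functional. -/
noncomputable def tFun {X : Type*} [MetricSpace X] (x : X) : ℝ :=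
  sSup {ε : ℝ | 0 < ε ∧ TotallyBounded (Metric.ball x ε)}


-- separated sequence from non-total-boundedness
theorem exists_sep_seq {Y : Type} [MetricSpace Y]
    (h : ¬ TotallyBounded (Set.univ : Set Y)) :
    ∃ ε > 0, ∃ y : ℕ → Y, ∀ m n, m ≠ n → ε ≤ dist (y m) (y n) := by
  classical
  rw [Metric.totallyBounded_iff] at h
  push_neg at h
  obtain ⟨ε, hε, hcov⟩ := h
  have H : ∀ t : Finset Y, ∃ z : Y, ∀ b ∈ t, ε ≤ dist z b := by
    intro t
    have := hcov t (t.finite_toSet)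
    rw [Set.not_subset] at this
    obtain ⟨z, -, hz⟩ := this
    refine ⟨z, fun b hb => ?_⟩
    by_contra hlt
    exact hz (Set.mem_biUnion hb (by simpa [Metric.mem_ball] using lt_of_not_ge hlt))
  choose g hg using H
  let F : ℕ → Finset Y := fun n => Nat.rec ∅ (fun _ s => insert (g s) s) n
  have hF : ∀ n, F (n+1) = insert (g (F n)) (F n) := fun n => rfl
  have hmono : ∀ m n, m ≤ n → F m ⊆ F n := by
    intro m n hmn
    induction n with
    | zero => simp_all
    | succ k ih =>
      rcases Nat.lt_or_ge m (k+1) with h1 | h1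
      · exact (ih (Nat.lt_succ_iff.mp h1)).trans (by rw [hF]; exact Finset.subset_insert _ _)
      · have : m = k + 1 := le_antisymm hmn h1
        subst this; exact Finset.Subset.rfl
  refine ⟨ε, hε, fun n => g (F n), ?_⟩
  have key : ∀ m n, m < n → ε ≤ dist (g (F n)) (g (F m)) := by
    intro m n hmn
    have : g (F m) ∈ F n := hmono (m+1) n hmn (by rw [hF]; exact Finset.mem_insert_self _ _)
    exact hg (F n) _ this
  intro m n hmn
  rcases lt_or_gt_of_ne hmn with h1 | h1
  · rw [dist_comm]; exact key m n h1
  · exact key n m h1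

theorem exists_inj_seq {X : Type} [MetricSpace X] (x₀ : X)
    (hne : (nhdsWithin x₀ {x₀}ᶜ).NeBot) :
    ∃ x : ℕ → X, Function.Injective x ∧ ∀ n, dist (x n) x₀ < 1/(n+1) := by
  have H : ∀ r : ℝ, 0 < r → ∃ z : X, z ≠ x₀ ∧ dist z x₀ < r := by
    intro r hr
    have h1 : Metric.ball x₀ r ∩ {x₀}ᶜ ∈ nhdsWithin x₀ {x₀}ᶜ :=
      Filter.inter_mem (mem_nhdsWithin_of_mem_nhds (Metric.ball_mem_nhds _ hr))
        self_mem_nhdsWithin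
    obtain ⟨z, hz1, hz2⟩ := hne.nonempty_of_mem h1
    exact ⟨z, hz2, by simpa [Metric.mem_ball] using hz1⟩
  choose c hc1 hc2 using H
  have one_pos : (0:ℝ) < 1 := one_pos
  let p : ℕ → {z : X // z ≠ x₀} := fun n => Nat.rec ⟨c 1 one_pos, hc1 1 one_pos⟩
    (fun k pk => ⟨c (min (dist pk.1 x₀) (1/(k+2)))
      (lt_min (dist_pos.mpr pk.2) (by positivity)), hc1 _ _⟩) n
  let x : ℕ → X := fun n => (p n).1
  have hxs : ∀ n, x (n+1) = c (min (dist (x n) x₀) (1/(n+2))) _ := fun n => rfl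
  have hlt : ∀ n, dist (x (n+1)) x₀ < dist (x n) x₀ := by
    intro n
    rw [hxs]
    exact lt_of_lt_of_le (hc2 _ _) (min_le_left _ _)
  have hbound : ∀ n, dist (x n) x₀ < 1/(n+1) := by
    intro n
    cases n with
    | zero => have h0 : dist (x 0) x₀ < 1 := hc2 1 one_pos; norm_num; exact h0
    | succ k =>
      rw [hxs]
      refine lt_of_lt_of_le (hc2 _ _) ((min_le_right _ _).trans ?_)
      push_cast
      ring_nf
      exact le_refl _
  have hanti : StrictAnti (fun n => dist (x n) x₀) := strictAnti_nat_of_succ_lt hlt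
  refine ⟨x, fun m n hmn => ?_, hbound⟩
  by_contra hne'
  rcases lt_or_gt_of_ne hne' with h1 | h1
  · exact absurd (congrArg (fun z => dist z x₀) hmn) (ne_of_gt (hanti h1))
  · exact absurd (congrArg (fun z => dist z x₀) hmn) (ne_of_lt (hanti h1))

/-- Y is totally bounded iff there exists a metric space X with a nonempty set of limit
points such that every function from X to Y is almost bounded. -/
theorem totallyBounded_iff_exists_space_almostBounded {Y : Type} [MetricSpace Y] :
    TotallyBounded (Set.univ : Set Y) ↔
      ∃ (X : Type) (_ : MetricSpace X),
        (∃ x : X, (nhdsWithin x {x}ᶜ).NeBot) ∧ ∀ f : X → Y, AlmostBounded f := by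
  constructor
  · intro h
    refine ⟨ℝ, inferInstance, ⟨0, inferInstance⟩, fun f ε hε => ?_⟩
    rw [Metric.totallyBounded_iff] at h
    obtain ⟨t, ht, hcov⟩ := h ε hε
    refine ⟨1, one_pos, fun A _ => ⟨ht.toFinset, ?_⟩⟩
    refine (Set.image_subset_range f A).trans ?_
    intro z _
    have := hcov (Set.mem_univ z)
    simpa [Set.Finite.mem_toFinset] using this
  · rintro ⟨X, _inst, ⟨x₀, hne⟩, hf⟩
    by_contra hTB
    obtain ⟨ε, hε, y, hy⟩ := exists_sep_seq hTB
    obtain ⟨x, hinj, hdist⟩ := exists_inj_seq x₀ hne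
    set f : X → Y := Function.extend x y (fun _ => y 0) with hfdef
    have hfx : ∀ n, f (x n) = y n := fun n => hinj.extend_apply _ _ n
    obtain ⟨δ, hδ, hB⟩ := hf f (ε/2) (by positivity)
    set A : Set X := Metric.ball x₀ (δ/3) with hA
    have hdiam : EMetric.diam A < ENNReal.ofReal δ := by
      rw [hA, ← Metric.emetric_ball]
      calc EMetric.diam (EMetric.ball x₀ (ENNReal.ofReal (δ/3)))
          ≤ 2 * ENNReal.ofReal (δ/3) := EMetric.diam_ball
        _ = ENNReal.ofReal (2 * (δ/3)) := by
            rw [ENNReal.ofReal_mul (by norm_num)]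
            norm_num
        _ < ENNReal.ofReal δ := by
            rw [ENNReal.ofReal_lt_ofReal_iff hδ]
            linarith
    obtain ⟨B, hBsub⟩ := hB A hdiam
    obtain ⟨N, hN⟩ := exists_nat_one_div_lt (show (0:ℝ) < δ/3 by linarith)
    have hxA : ∀ n, N ≤ n → x n ∈ A := by
      intro n hn
      have h1 : dist (x n) x₀ < 1/(n+1) := hdist n
      have h2 : (1:ℝ)/(n+1) ≤ 1/(N+1) := by
        apply one_div_le_one_div_of_le (by positivity)
        exact_mod_cast by omega
      exact Metric.mem_ball.mpr (lt_of_lt_of_le h1 (h2.trans hN.le))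
    have hyB : ∀ i : ℕ, ∃ b ∈ B, dist (y (N+i)) b < ε/2 := by
      intro i
      have : y (N+i) ∈ f '' A := ⟨x (N+i), hxA _ (Nat.le_add_right _ _), hfx _⟩
      have := hBsub this
      simpa [Metric.mem_ball] using this
    choose g hgB hgd using hyB
    have hginj : Function.Injective fun i : ℕ => (⟨g i, hgB i⟩ : {b // b ∈ B}) := by
      intro i j hij
      by_contra hne'
      have hgij : g i = g j := congrArg Subtype.val hij
      have hsep : ε ≤ dist (y (N+i)) (y (N+j)) := hy _ _ (by omega)
      have : dist (y (N+i)) (y (N+j)) < ε := by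
        calc dist (y (N+i)) (y (N+j)) ≤ dist (y (N+i)) (g i) + dist (g j) (y (N+j)) := by
              rw [hgij]; exact dist_triangle _ _ _
          _ < ε/2 + ε/2 := by
              have := hgd i
              have h2 := hgd j
              rw [dist_comm] at h2
              linarith
          _ = ε := by ring
      linarith
    have : Finite ℕ := Finite.of_injective _ hginj
    exact not_finite ℕ
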